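/- Let ℓ ≥ 5 be a prime and let a, b ∈ ℚ₂ be nonzero elements with a^ℓ + b^ℓ + 1 = 0. Set λ = −a^ℓ and let E_λ be the Weierstrass curve y² = x(x−1)(x−λ) over ℚ₂. Then Δ(E_λ) ≠ 0, j(E_λ) ≠ 0, and v_2(j(E_λ)) < 0. -/

import Mathlib

section Helpers

variable {p : ℕ} [Fact p.Prime]

private lemma vpow' (x : ℚ_[p]) (hx : x ≠ 0) (n : ℕ) :
    (x ^ n).valuation = n * x.valuation := by
  induction n with
  | zero => simp
  | succ n ih =>
      rw [pow_succ, Padic.valuation_mul (pow_ne_zero n hx) hx, ih]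
      push_cast; ring

private lemma vneg' (x : ℚ_[p]) : (-x).valuation = x.valuation := by
  rcases eq_or_ne x 0 with rfl | hx
  · simp
  · have h1 : ((-1 : ℚ_[p])).valuation = 0 := by
      have := Padic.valuation_mul (p := p) (x := -1) (y := -1) (by norm_num) (by norm_num)
      simp at this
      omega
    have : (-x) = (-1) * x := by ring
    rw [this, Padic.valuation_mul (by norm_num) hx, h1, zero_add]

private lemma vinv' (x : ℚ_[p]) (hx : x ≠ 0) : (x⁻¹).valuation = -x.valuation := by
  have := Padic.valuation_mul hx (inv_ne_zero hx)
  rw [mul_inv_cancel₀ hx, Padic.valuation_one] at this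
  omega

private lemma vadd_eq_left' {x y : ℚ_[p]} (hx : x ≠ 0)
    (h : x.valuation < y.valuation) : (x + y).valuation = x.valuation := by
  have hxy : x + y ≠ 0 := by
    intro h0
    have : y = -x := by linear_combination h0
    rw [this, vneg'] at h
    exact lt_irrefl _ h
  refine le_antisymm ?_ ?_
  · by_contra hlt
    push_neg at hlt
    have h2 : x = (x + y) + (-y) := by ring
    have h3 := Padic.le_valuation_add (x := x + y) (y := -y) (by rw [← h2]; exact hx)
    rw [← h2, vneg'] at h3
    have := min_le_iff.mp h3
    omega
  · have := Padic.le_valuation_add hxy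
    omega

private lemma unit_sum' (x y : ℚ_[2]) (hx : ‖x‖ = 1) (hy : ‖y‖ = 1) : x + y + 1 ≠ 0 := by
  intro h0
  set X : ℤ_[2] := ⟨x, by rw [hx]⟩
  set Y : ℤ_[2] := ⟨y, by rw [hy]⟩
  have hsum : X + Y + 1 = 0 := by
    apply Subtype.ext
    push_cast
    exact h0
  have key : ∀ z : ℤ_[2], ‖z‖ = 1 → PadicInt.toZMod z = 1 := by
    intro z hz
    have hne : PadicInt.toZMod z ≠ 0 := by
      intro h
      have : z ∈ RingHom.ker (PadicInt.toZMod : ℤ_[2] →+* ZMod 2) := h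
      rw [PadicInt.ker_toZMod, PadicInt.maximalIdeal_eq_span_p, Ideal.mem_span_singleton,
        ← PadicInt.norm_lt_one_iff_dvd] at this
      rw [hz] at this
      exact lt_irrefl _ this
    revert hne
    generalize PadicInt.toZMod z = w
    revert w
    decide
  have h1 : PadicInt.toZMod X = 1 := key X (by rw [PadicInt.norm_def]; exact hx)
  have h2 : PadicInt.toZMod Y = 1 := key Y (by rw [PadicInt.norm_def]; exact hy)
  have := congrArg PadicInt.toZMod hsum
  rw [map_add, map_add, map_one, map_zero, h1, h2] at this
  exact absurd this (by decide)

end Helpers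

/-- The Legendre curve `y² = x(x-1)(x-λ)` as a Weierstrass curve. -/
def LegendreCurve {R : Type*} [CommRing R] (lam : R) : WeierstrassCurve R :=
  { a₁ := 0, a₂ := -(lam + 1), a₃ := 0, a₄ := lam, a₆ := 0 }

private lemma LC_Δ {R : Type*} [CommRing R] (l : R) :
    (LegendreCurve l).Δ = 16 * (l * (l - 1)) ^ 2 := by
  simp only [LegendreCurve, WeierstrassCurve.Δ, WeierstrassCurve.b₂, WeierstrassCurve.b₄,
    WeierstrassCurve.b₆, WeierstrassCurve.b₈]
  ring

private lemma LC_c₄ {R : Type*} [CommRing R] (l : R) :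
    (LegendreCurve l).c₄ = 16 * (l * (l - 1) + 1) := by
  simp only [LegendreCurve, WeierstrassCurve.c₄, WeierstrassCurve.b₂, WeierstrassCurve.b₄]
  ring

theorem stmt1 (ℓ : ℕ) (hℓ : ℓ.Prime) (h5 : 5 ≤ ℓ) (a b : ℚ_[2])
    (ha : a ≠ 0) (hb : b ≠ 0) (hab : a ^ ℓ + b ^ ℓ + 1 = 0) :
    (LegendreCurve (-a ^ ℓ)).Δ ≠ 0 ∧
    (LegendreCurve (-a ^ ℓ)).c₄ ^ 3 / (LegendreCurve (-a ^ ℓ)).Δ ≠ 0 ∧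
    ((LegendreCurve (-a ^ ℓ)).c₄ ^ 3 / (LegendreCurve (-a ^ ℓ)).Δ).valuation < 0 := by
  have hL5 : (5 : ℤ) ≤ (ℓ : ℤ) := by exact_mod_cast h5
  set c : ℚ_[2] := a * b with hc_def
  have hc : c ≠ 0 := mul_ne_zero ha hb
  set m : ℤ := a.valuation
  set n : ℤ := b.valuation
  have hk : c.valuation = m + n := Padic.valuation_mul ha hb
  set k : ℤ := c.valuation
  have hva : (a ^ ℓ).valuation = (ℓ : ℤ) * m := vpow' a ha ℓ
  have hvb : (b ^ ℓ).valuation = (ℓ : ℤ) * n := vpow' b hb ℓ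
  have hvc : (c ^ ℓ).valuation = (ℓ : ℤ) * k := vpow' c hc ℓ
  have hab' : a ^ ℓ + b ^ ℓ = -1 := by linear_combination hab
  have hsumne : a ^ ℓ + b ^ ℓ ≠ 0 := by rw [hab']; norm_num
  have hvm1 : ((-1 : ℚ_[2])).valuation = 0 := by
    rw [show (-1 : ℚ_[2]) = -(1 : ℚ_[2]) by norm_num, vneg', Padic.valuation_one]
  have hvsum : (a ^ ℓ + b ^ ℓ).valuation = 0 := by rw [hab', hvm1]
  -- not both units
  have hA : ¬(m = 0 ∧ n = 0) := by
    rintro ⟨hm, hn⟩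
    refine unit_sum' (a ^ ℓ) (b ^ ℓ) ?_ ?_ hab
    · rw [Padic.norm_eq_zpow_neg_valuation (pow_ne_zero ℓ ha), hva, hm]; norm_num
    · rw [Padic.norm_eq_zpow_neg_valuation (pow_ne_zero ℓ hb), hvb, hn]; norm_num
  -- case analysis on valuations
  have hlpos : (0 : ℤ) < (ℓ : ℤ) := by exact_mod_cast hℓ.pos
  have hcase : 1 ≤ k ∨ k ≤ -2 := by
    rcases lt_trichotomy m n with hmn | hmn | hmn
    · -- v(a^ℓ) < v(b^ℓ): sum valuation = ℓm = 0
      have hlt : (a ^ ℓ).valuation < (b ^ ℓ).valuation := by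
        rw [hva, hvb]
        exact mul_lt_mul_of_pos_left hmn hlpos
      have heq := vadd_eq_left' (x := a ^ ℓ) (y := b ^ ℓ) (pow_ne_zero ℓ ha) hlt
      rw [hvsum, hva] at heq
      have hm0 : m = 0 := by
        rcases mul_eq_zero.mp heq.symm with h | h
        · omega
        · exact h
      have hn0 : n ≠ 0 := fun h => hA ⟨hm0, h⟩
      left; omega
    · -- m = n
      have hm0 : m ≠ 0 := fun h => hA ⟨h, hmn ▸ h⟩
      have hmin := Padic.le_valuation_add hsumne
      rw [hvsum, hva, hvb, ← hmn, min_self] at hmin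
      have hmle : m ≤ 0 := by nlinarith
      right; omega
    · -- v(b^ℓ) < v(a^ℓ)
      have hlt : (b ^ ℓ).valuation < (a ^ ℓ).valuation := by
        rw [hva, hvb]
        exact mul_lt_mul_of_pos_left hmn hlpos
      have heq := vadd_eq_left' (x := b ^ ℓ) (y := a ^ ℓ) (pow_ne_zero ℓ hb) hlt
      rw [add_comm (b ^ ℓ), hvsum, hvb] at heq
      have hn0 : n = 0 := by
        rcases mul_eq_zero.mp heq.symm with h | h
        · omega
        · exact h
      have hm0 : m ≠ 0 := fun h => hA ⟨h, hn0⟩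
      left; omega
  have hk0 : k ≠ 0 := by omega
  -- algebraic identities
  have hprod : (-a ^ ℓ) * ((-a ^ ℓ) - 1) = -(c ^ ℓ) := by
    rw [hc_def, mul_pow]; linear_combination (a ^ ℓ) * hab
  set u : ℚ_[2] := (-a ^ ℓ) * ((-a ^ ℓ) - 1) + 1 with hu_def
  have hue : u = -(c ^ ℓ) + 1 := by rw [hu_def, hprod]
  have hu : u ≠ 0 := by
    rw [hue]
    intro h0
    have hc1 : c ^ ℓ = 1 := by linear_combination -h0
    rw [hc1, Padic.valuation_one] at hvc
    exact hk0 (by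
      rcases mul_eq_zero.mp hvc.symm with h | h
      · exact absurd h (by positivity)
      · exact h)
  have hΔ : (LegendreCurve (-a ^ ℓ)).Δ = 16 * (c ^ ℓ) ^ 2 := by
    rw [LC_Δ, hprod]; ring
  have hc4 : (LegendreCurve (-a ^ ℓ)).c₄ = 16 * u := by rw [LC_c₄]
  have hΔne : (LegendreCurve (-a ^ ℓ)).Δ ≠ 0 := by
    rw [hΔ]
    exact mul_ne_zero (by norm_num) (pow_ne_zero 2 (pow_ne_zero ℓ hc))
  have hj : (LegendreCurve (-a ^ ℓ)).c₄ ^ 3 / (LegendreCurve (-a ^ ℓ)).Δ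
      = (2 : ℚ_[2]) ^ 8 * u ^ 3 * (((c ^ ℓ) ^ 2)⁻¹) := by
    rw [hc4, hΔ]
    field_simp
    ring
  have hjne : (LegendreCurve (-a ^ ℓ)).c₄ ^ 3 / (LegendreCurve (-a ^ ℓ)).Δ ≠ 0 := by
    rw [hj]
    exact mul_ne_zero (mul_ne_zero (by norm_num) (pow_ne_zero 3 hu))
      (inv_ne_zero (pow_ne_zero 2 (pow_ne_zero ℓ hc)))
  refine ⟨hΔne, hjne, ?_⟩
  -- valuation computation
  have v2 : ((2 : ℚ_[2])).valuation = 1 := by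
    rw [show ((2 : ℚ_[2])) = ((2 : ℕ) : ℚ_[2]) by norm_num]
    exact Padic.valuation_p
  have vc2 : (((c ^ ℓ) ^ 2)⁻¹).valuation = -(2 * ((ℓ : ℤ) * k)) := by
    rw [vinv' _ (pow_ne_zero 2 (pow_ne_zero ℓ hc)), vpow' _ (pow_ne_zero ℓ hc) 2, hvc]
    push_cast; ring
  have hjval : ((LegendreCurve (-a ^ ℓ)).c₄ ^ 3 / (LegendreCurve (-a ^ ℓ)).Δ).valuation
      = 8 + 3 * u.valuation - 2 * ((ℓ : ℤ) * k) := by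
    rw [hj, Padic.valuation_mul (mul_ne_zero (by norm_num) (pow_ne_zero 3 hu))
      (inv_ne_zero (pow_ne_zero 2 (pow_ne_zero ℓ hc))),
      Padic.valuation_mul (by norm_num : ((2:ℚ_[2])^8) ≠ 0) (pow_ne_zero 3 hu),
      vpow' _ (by norm_num : (2:ℚ_[2]) ≠ 0) 8, v2,
      vpow' _ hu 3, vc2]
    push_cast; ring
  rw [hjval]
  rcases hcase with hk1 | hk2
  · -- k ≥ 1 : v(u) = 0
    have hvu : u.valuation = 0 := by
      have h1 : ((1 : ℚ_[2])).valuation = 0 := Padic.valuation_one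
      have := vadd_eq_left' (x := (1 : ℚ_[2])) (y := -(c ^ ℓ)) one_ne_zero
        (by rw [h1, vneg', hvc]; positivity)
      rw [hue, add_comm, this, h1]
    rw [hvu]
    nlinarith
  · -- k ≤ -2 : v(u) = ℓk
    have hvu : u.valuation = (ℓ : ℤ) * k := by
      have := vadd_eq_left' (x := -(c ^ ℓ)) (y := (1 : ℚ_[2]))
        (neg_ne_zero.mpr (pow_ne_zero ℓ hc))
        (by rw [vneg', hvc, Padic.valuation_one]; nlinarith)
      rw [hue, this, vneg', hvc]
    rw [hvu]
    nlinarith
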